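/- arXiv:1005.0786 — 2 statements merged into one kernel-verified Lean document; each statement's English description precedes it below -/
import Mathlib

section
/- Let k be a field of characteristic zero, R = MvPolynomial σ k for a finite type σ, I an ideal of R, b ≥ 1, and m a k-rational maximal ideal of R with I ⊆ m^b. Define T = Δ^{b−1}(I) and the homogenized ideal H(I, b) = I + Δ(I)·T + Δ^2(I)·T^2 + ⋯ + Δ^{b−1}(I)·T^{b−1}. Then H(I, b) ⊆ m^b. -/
open MvPolynomial

/-- The derivative extension `Δ(I) = I + (∂f/∂X_i : f ∈ I, i)` of an ideal of a
multivariate polynomial ring. -/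
noncomputable def deltaIdeal {k : Type*} [Field k] {σ : Type*} [Fintype σ]
    (I : Ideal (MvPolynomial σ k)) : Ideal (MvPolynomial σ k) :=
  I ⊔ Ideal.span {g | ∃ f ∈ I, ∃ i : σ, g = pderiv i f}

/-- derivative drops power order by one -/
lemma pderiv_mem_pow {k : Type*} [Field k] {σ : Type*} [Fintype σ]
    (a : σ → k) (c : ℕ) (j : σ) :
    ∀ f ∈ (Ideal.span (Set.range fun i : σ => X i - C (a i))) ^ (c + 1),
      pderiv j f ∈ (Ideal.span (Set.range fun i : σ => X i - C (a i))) ^ c := by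
  induction c with
  | zero => intro f _; simp
  | succ c ih =>
    intro f hf
    rw [pow_succ'] at hf
    refine Submodule.mul_induction_on hf ?_ ?_
    · intro x hx y hy
      rw [pderiv_mul]
      refine Ideal.add_mem _ ?_ ?_
      · exact Ideal.mul_mem_left _ _ hy
      · rw [pow_succ']
        exact Ideal.mul_mem_mul hx (ih y hy)
    · intro x y hx hy
      rw [map_add]; exact Ideal.add_mem _ hx hy

lemma deltaIdeal_le_pow {k : Type*} [Field k] {σ : Type*} [Fintype σ]
    (a : σ → k) (c : ℕ) (J : Ideal (MvPolynomial σ k))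
    (hJ : J ≤ (Ideal.span (Set.range fun i : σ => X i - C (a i))) ^ (c + 1)) :
    deltaIdeal J ≤ (Ideal.span (Set.range fun i : σ => X i - C (a i))) ^ c := by
  apply sup_le
  · exact le_trans hJ (Ideal.pow_le_pow_right (by omega))
  · rw [Ideal.span_le]
    rintro g ⟨f, hf, i, rfl⟩
    exact pderiv_mem_pow a c i f (hJ hf)

lemma iter_delta_le {k : Type*} [Field k] {σ : Type*} [Fintype σ]
    (a : σ → k) (b : ℕ) (I : Ideal (MvPolynomial σ k))
    (hI : I ≤ (Ideal.span (Set.range fun i : σ => X i - C (a i))) ^ b) (i : ℕ) :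
    (deltaIdeal)^[i] I ≤ (Ideal.span (Set.range fun i : σ => X i - C (a i))) ^ (b - i) := by
  induction i with
  | zero => simpa using hI
  | succ i ih =>
    rw [Function.iterate_succ_apply']
    rcases Nat.eq_zero_or_pos (b - i) with h | h
    · have : b - (i+1) = 0 := by omega
      rw [this, pow_zero, Ideal.one_eq_top]; exact le_top
    · have h2 : b - i = (b - (i+1)) + 1 := by omega
      rw [h2] at ih
      exact deltaIdeal_le_pow a _ _ ih

/-- if `I ⊆ m^b` at a rational point, then the homogenized ideal
`H(I, b) = Σ_{i<b} Δ^i(I)·T^i` (with `T = Δ^{b−1}(I)`) is also contained in `m^b`. -/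
theorem homogenized_ideal_le_pow
    {k : Type*} [Field k] [CharZero k] {σ : Type*} [Fintype σ]
    (I : Ideal (MvPolynomial σ k)) (b : ℕ) (hb : 1 ≤ b) (a : σ → k)
    (hI : I ≤ (Ideal.span (Set.range fun i : σ => X i - C (a i))) ^ b) :
    (∑ i ∈ Finset.range b, (deltaIdeal)^[i] I * ((deltaIdeal)^[b - 1] I) ^ i) ≤
      (Ideal.span (Set.range fun i : σ => X i - C (a i))) ^ b := by
  set m := Ideal.span (Set.range fun i : σ => X i - C (a i)) with hm
  have hT : (deltaIdeal)^[b - 1] I ≤ m := by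
    have := iter_delta_le a b I hI (b - 1)
    have hb1 : b - (b - 1) = 1 := by omega
    rwa [hb1, pow_one] at this
  refine Finset.sum_induction _ (· ≤ m ^ b) (fun p q hp hq => sup_le hp hq) bot_le ?_
  intro i hi
  rw [Finset.mem_range] at hi
  have h1 : (deltaIdeal)^[i] I ≤ m ^ (b - i) := iter_delta_le a b I hI i
  have h2 : ((deltaIdeal)^[b - 1] I) ^ i ≤ m ^ i := Ideal.pow_right_mono hT i
  calc (deltaIdeal)^[i] I * ((deltaIdeal)^[b - 1] I) ^ i
      ≤ m ^ (b - i) * m ^ i := Ideal.mul_mono h1 h2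
    _ = m ^ b := by rw [← pow_add]; congr 1; omega
end

section
/- Let k be a field of characteristic zero, R = MvPolynomial σ k (σ finite), I an ideal, b ≥ 1, and m a k-rational maximal ideal with I ⊆ m^b. Define the coefficient ideal C(I) = Σ_{i=0}^{b−1} (Δ^i(I))^{b!/(b−i)}. Then C(I) ⊆ m^{b!}. -/
open MvPolynomial

/-- A derivation maps `J^(n+1)` into `J^n`. -/
lemma derivation_mem_pow {R A : Type*} [CommRing R] [CommRing A] [Algebra R A]
    (D : Derivation R A A) (J : Ideal A) :
    ∀ n, ∀ x ∈ J ^ (n + 1), D x ∈ J ^ n := by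
  intro n
  induction n with
  | zero => intro x _; simp
  | succ n ih =>
    intro x hx
    rw [pow_succ] at hx
    refine Submodule.mul_induction_on hx ?_ ?_
    · intro a ha b hb
      rw [Derivation.leibniz]
      refine add_mem ?_ ?_
      · rw [smul_eq_mul]
        exact Ideal.mul_mem_right _ _ ha
      · rw [smul_eq_mul, mul_comm, pow_succ]
        exact Ideal.mul_mem_mul (ih a ha) hb
    · intro x y hx hy
      rw [map_add]; exact add_mem hx hy

lemma deltaIdeal_le_pow_s15 {k : Type*} [Field k] {σ : Type*} [Fintype σ]
    (I J : Ideal (MvPolynomial σ k)) (n : ℕ) (hI : I ≤ J ^ (n + 1)) :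
    deltaIdeal I ≤ J ^ n := by
  refine sup_le (hI.trans (Ideal.pow_le_pow_right (Nat.le_succ n))) ?_
  rw [Ideal.span_le]
  rintro g ⟨f, hf, i, rfl⟩
  exact derivation_mem_pow (pderiv i) J n f (hI hf)

/-- if `I ⊆ m^b` at a rational point, then the coefficient ideal
`C(I) = Σ_{i<b} (Δ^i(I))^{b!/(b−i)}` is contained in `m^{b!}`. -/
theorem coefficient_ideal_le_pow_factorial
    {k : Type*} [Field k] [CharZero k] {σ : Type*} [Fintype σ]
    (I : Ideal (MvPolynomial σ k)) (b : ℕ) (hb : 1 ≤ b) (a : σ → k)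
    (hI : I ≤ (Ideal.span (Set.range fun i : σ => X i - C (a i))) ^ b) :
    (∑ i ∈ Finset.range b, ((deltaIdeal)^[i] I) ^ (Nat.factorial b / (b - i))) ≤
      (Ideal.span (Set.range fun i : σ => X i - C (a i))) ^ (Nat.factorial b) := by
  set m := Ideal.span (Set.range fun i : σ => X i - C (a i)) with hm
  have key : ∀ i, i ≤ b → (deltaIdeal)^[i] I ≤ m ^ (b - i) := by
    intro i
    induction i with
    | zero => intro _; simpa using hI
    | succ i ih =>
      intro hib
      have hib' : i ≤ b := Nat.le_of_succ_le hib
      have h1 : b - i = (b - (i + 1)) + 1 := by omega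
      rw [Function.iterate_succ_apply']
      apply deltaIdeal_le_pow_s15
      rw [← h1]
      exact ih hib'
  rw [Ideal.sum_eq_sup]
  refine Finset.sup_le fun i hi => ?_
  rw [Finset.mem_range] at hi
  have hdvd : (b - i) ∣ Nat.factorial b :=
    Nat.dvd_factorial (by omega) (by omega)
  calc ((deltaIdeal)^[i] I) ^ (Nat.factorial b / (b - i))
      ≤ (m ^ (b - i)) ^ (Nat.factorial b / (b - i)) :=
        Ideal.pow_right_mono (key i (Nat.le_of_lt hi)) _
    _ = m ^ (Nat.factorial b) := by
        rw [← pow_mul, Nat.mul_div_cancel' hdvd]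
end
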